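/- Let m ≥ 1, let y ∈ ℝ^m be sorted in nonincreasing order y_1 ≥ ⋯ ≥ y_m, let ρ = max{ i ∈ [m] : y_i − (1/i)(Σ_{j=1}^i y_j − 1) > 0 }, λ = (1/ρ)(Σ_{i=1}^ρ y_i − 1), and define x* componentwise by x*_i = max(y_i − λ, 0). Then x*_i ≥ 0 for all i and Σ_{i=1}^m x*_i = 1; that is, x* lies in the probability simplex Δ_m. -/

import Mathlib

/-- Feasibility of the output of the simplex-projection algorithm: with `y`
sorted nonincreasingly, `ρ` and `λ` as computed by the algorithm, the vector
`x*_i = max(y_i − λ, 0)` has nonnegative entries summing to `1`. -/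
theorem simplex_projection_output_feasible
    (m : ℕ) (hm : 1 ≤ m) (y : Fin m → ℝ)
    (hsorted : ∀ i j : Fin m, i ≤ j → y j ≤ y i)
    (ρ : Fin m)
    (hρmem : 0 < y ρ - (1 / ((ρ : ℕ) + 1 : ℝ)) * ((∑ j ∈ Finset.Iic ρ, y j) - 1))
    (hρmax : ∀ i : Fin m,
      0 < y i - (1 / ((i : ℕ) + 1 : ℝ)) * ((∑ j ∈ Finset.Iic i, y j) - 1) → i ≤ ρ)
    (l : ℝ) (hl : l = (1 / ((ρ : ℕ) + 1 : ℝ)) * ((∑ i ∈ Finset.Iic ρ, y i) - 1))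
    (xstar : Fin m → ℝ) (hx : ∀ i, xstar i = max (y i - l) 0) :
    (∀ i, 0 ≤ xstar i) ∧ ∑ i, xstar i = 1 := by
  have hρpos : (0:ℝ) < (ρ : ℕ) + 1 := by positivity
  have hρl : 0 < y ρ - l := by rw [hl]; exact hρmem
  have e1 : ((ρ:ℕ) + 1 : ℝ) * l = (∑ i ∈ Finset.Iic ρ, y i) - 1 := by
    rw [hl]; field_simp
  have hle : ∀ i : Fin m, ¬ i ≤ ρ → y i ≤ l := by
    intro i hi
    have hρi : (ρ : ℕ) < (i : ℕ) := Fin.lt_def.mp (not_le.mp hi)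
    have hk : (ρ : ℕ) + 1 < m := lt_of_le_of_lt hρi i.isLt
    set k : Fin m := ⟨(ρ : ℕ) + 1, hk⟩ with hkdef
    have hkv : (k : ℕ) = (ρ : ℕ) + 1 := rfl
    have hknle : ¬ k ≤ ρ := by simp [Fin.le_def, hkv]
    have h2 : ¬ (0 < y k - (1 / ((k : ℕ) + 1 : ℝ)) * ((∑ j ∈ Finset.Iic k, y j) - 1)) :=
      fun h => hknle (hρmax k h)
    push_neg at h2
    have hIic : Finset.Iic k = insert k (Finset.Iic ρ) := by
      ext j
      simp only [Finset.mem_Iic, Finset.mem_insert, Fin.le_def, Fin.ext_iff, hkv]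
      omega
    have hknotmem : k ∉ Finset.Iic ρ := by simpa [Finset.mem_Iic] using hknle
    rw [hIic, Finset.sum_insert hknotmem] at h2
    have hkval : ((k : ℕ) : ℝ) + 1 = ((ρ : ℕ) : ℝ) + 2 := by
      rw [hkv]; push_cast; ring
    rw [hkval] at h2
    have hρ2 : (0:ℝ) < ((ρ:ℕ):ℝ) + 2 := by positivity
    have h3 : y k - (1 / (((ρ:ℕ):ℝ) + 2)) * ((y k + ∑ j ∈ Finset.Iic ρ, y j) - 1) ≤ 0 := h2
    have h4 : (((ρ:ℕ):ℝ) + 2) * y k ≤ y k + ∑ j ∈ Finset.Iic ρ, y j - 1 := by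
      have := mul_le_mul_of_nonneg_left h3 (le_of_lt hρ2)
      field_simp at this
      linarith [this]
    have h5 : (((ρ:ℕ):ℝ) + 1) * y k ≤ (((ρ:ℕ):ℝ) + 1) * l := by
      rw [e1]; linarith
    have hyk : y k ≤ l := le_of_mul_le_mul_left (by linarith) hρpos
    have : y i ≤ y k := hsorted k i (by simp [Fin.le_def, hkv]; omega)
    linarith
  constructor
  · intro i; rw [hx]; exact le_max_right _ _
  · have hsum : ∑ i, xstar i = ∑ i ∈ Finset.Iic ρ, (y i - l) := by
      rw [← Finset.sum_add_sum_compl (Finset.Iic ρ)]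
      have h1 : ∀ i ∈ Finset.Iic ρ, xstar i = y i - l := by
        intro i hi
        rw [hx]
        exact max_eq_left (le_of_lt (lt_of_lt_of_le hρl
          (by have := hsorted i ρ (Finset.mem_Iic.mp hi); linarith)))
      have h2 : ∀ i ∈ (Finset.Iic ρ)ᶜ, xstar i = 0 := by
        intro i hi
        rw [hx]
        apply max_eq_right
        have hni : ¬ i ≤ ρ := by simpa [Finset.mem_Iic] using hi
        linarith [hle i hni]
      rw [Finset.sum_congr rfl h1, Finset.sum_congr rfl h2, Finset.sum_const_zero, add_zero]
    rw [hsum, Finset.sum_sub_distrib, Finset.sum_const, Fin.card_Iic, nsmul_eq_mul]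
    push_cast
    linarith [e1]
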